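/- The binary word p = 101 has an internal zero at n = 6 and does not have an internal zero at any other n ≥ 0; equivalently, for every n ≠ 6 and every k with 0 ≤ k ≤ M_{n,101}, there is a binary word of length n with exactly k occurrences of 101, while B_{6,101}(5) = 0 and B_{6,101}(6) ≠ 0. -/

import Mathlib

/-- `occ p w` is the number of occurrences of `p` as a subsequence of `w`,
i.e. the number of choices of indices `i₁ < ⋯ < i_l` in `w` matching `p`. -/
def occ (p w : List Bool) : ℕ := w.sublists.count p

/-- `B n p k` is the number of binary words of length `n` with exactly `k` occurrences of `p`. -/
noncomputable def B (n : ℕ) (p : List Bool) (k : ℕ) : ℕ :=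
  Nat.card {w : List Bool // w.length = n ∧ occ p w = k}

/-- The list of runs (maximal blocks of consecutive equal letters) of a binary word. -/
def runs (p : List Bool) : List (List Bool) := p.splitBy (· == ·)

/-- The number of runs of a binary word. -/
def numRuns (p : List Bool) : ℕ := (runs p).length

/-- The number of runs of size `i` of a binary word. -/
def numRunsOfSize (p : List Bool) (i : ℕ) : ℕ := ((runs p).map List.length).count i

/-- `maxOcc n p` is the maximum number of occurrences of `p` among binary words of length `n`. -/
noncomputable def maxOcc (n : ℕ) (p : List Bool) : ℕ :=
  sSup {k | ∃ w : List Bool, w.length = n ∧ occ p w = k}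

/-- `p` has an internal zero at `n` if the sequence `(B n p k)_{k ≥ 0}` has an internal zero. -/
def HasInternalZeroAt (p : List Bool) (n : ℕ) : Prop :=
  ∃ k₁ k₂ k₃ : ℕ, k₁ < k₂ ∧ k₂ < k₃ ∧ B n p k₁ ≠ 0 ∧ B n p k₂ = 0 ∧ B n p k₃ ≠ 0

def c1 (w : List Bool) : ℕ := w.count true

def zlevels : List Bool → List ℕ
  | [] => []
  | true :: w => (zlevels w).map (· + 1)
  | false :: w => 0 :: zlevels w

def zSum (w : List Bool) : ℕ := ((zlevels w).map (fun a => a * (c1 w - a))).sum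

lemma c1_append (w v : List Bool) : c1 (w ++ v) = c1 w + c1 v := by
  simp [c1, List.count_append]

lemma zlevels_append (u v : List Bool) :
    zlevels (u ++ v) = zlevels u ++ (zlevels v).map (· + c1 u) := by
  induction u with
  | nil => simp [zlevels, c1]
  | cons b u ih =>
    cases b
    · simp [zlevels, ih, c1, List.count_cons]
    · show (zlevels (u ++ v)).map (· + 1) = (zlevels u).map (· + 1) ++ (zlevels v).map (· + c1 (true :: u))
      rw [ih, List.map_append, List.map_map]
      congr 1
      apply List.map_congr_left
      intro a _
      simp [c1, List.count_cons]
      omega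

lemma count_concat_end (L : List (List Bool)) (b : Bool) (p q : List Bool) (h : p = q ++ [b]) :
    (L.map (fun x => x ++ [b])).count p = L.count q := by
  subst h
  induction L with
  | nil => rfl
  | cons x L ih =>
    simp only [List.map_cons, List.count_cons, ih]
    congr 1
    have : (x ++ [b] == q ++ [b]) = (x == q) := by
      rcases Bool.eq_false_or_eq_true (x == q) with h | h <;>
        simp_all
    rw [this]

lemma count_concat_end_zero (L : List (List Bool)) (b : Bool) (p : List Bool)
    (h : p.getLast? ≠ some b) : (L.map (fun x => x ++ [b])).count p = 0 := by
  rw [List.count_eq_zero]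
  intro hmem
  rw [List.mem_map] at hmem
  obtain ⟨x, -, rfl⟩ := hmem
  exact h (by simp)

lemma occ_concat (w : List Bool) (b : Bool) (p : List Bool) :
    occ p (w ++ [b]) =
      occ p w + if h : p.getLast? = some b then (w.sublists.count p.dropLast) else 0 := by
  rw [occ, List.sublists_concat, List.count_append]
  congr 1
  split
  · next h =>
    refine count_concat_end _ _ _ _ ?_
    have := List.dropLast_append_getLast? _ h
    exact this.symm
  · next h => exact count_concat_end_zero _ _ _ h

lemma occ_nil_pat (w : List Bool) : occ [] w = 1 := by
  induction w using List.reverseRecOn with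
  | nil => rfl
  | append_singleton w b ih =>
      rw [occ_concat]
      simp [ih]


lemma occ1_t (w : List Bool) : occ [true] (w ++ [true]) = occ [true] w + 1 := by
  rw [occ_concat, dif_pos (by decide)]
  have : List.count [true].dropLast w.sublists = occ [] w := rfl
  rw [this, occ_nil_pat]

lemma occ1_f (w : List Bool) : occ [true] (w ++ [false]) = occ [true] w := by
  rw [occ_concat, dif_neg (by decide)]
  rfl

lemma occ2_t (w : List Bool) : occ [true, false] (w ++ [true]) = occ [true, false] w := by
  rw [occ_concat, dif_neg (by decide)]
  rfl

lemma occ2_f (w : List Bool) :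
    occ [true, false] (w ++ [false]) = occ [true, false] w + occ [true] w := by
  rw [occ_concat, dif_pos (by decide)]
  rfl

lemma occ3_t (w : List Bool) :
    occ [true, false, true] (w ++ [true]) = occ [true, false, true] w + occ [true, false] w := by
  rw [occ_concat, dif_pos (by decide)]
  rfl

lemma occ3_f (w : List Bool) :
    occ [true, false, true] (w ++ [false]) = occ [true, false, true] w := by
  rw [occ_concat, dif_neg (by decide)]
  rfl

lemma zlevels_concat_true (w : List Bool) : zlevels (w ++ [true]) = zlevels w := by
  rw [zlevels_append]; simp [zlevels]

lemma zlevels_concat_false (w : List Bool) : zlevels (w ++ [false]) = zlevels w ++ [c1 w] := by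
  rw [zlevels_append]; simp [zlevels]

lemma sum_shift (L : List ℕ) (t : ℕ) (h : ∀ a ∈ L, a ≤ t) :
    (L.map (fun a => a * (t + 1 - a))).sum = (L.map (fun a => a * (t - a))).sum + L.sum := by
  induction L with
  | nil => simp
  | cons x L ih =>
    simp only [List.map_cons, List.sum_cons]
    rw [ih (fun a ha => h a (by simp [ha]))]
    have hx : x ≤ t := h x (by simp)
    have : x * (t + 1 - x) = x * (t - x) + x := by
      have h1 : t + 1 - x = (t - x) + 1 := by omega
      rw [h1, Nat.mul_succ]
    omega

lemma main_char : ∀ w : List Bool, occ [true] w = c1 w ∧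
    occ [true, false] w = (zlevels w).sum ∧
    occ [true, false, true] w = zSum w ∧
    ∀ a ∈ zlevels w, a ≤ c1 w := by
  intro w
  induction w using List.reverseRecOn with
  | nil => refine ⟨rfl, rfl, rfl, by simp [zlevels]⟩
  | append_singleton w b ih =>
    obtain ⟨h1, h2, h3, hb⟩ := ih
    cases b
    · refine ⟨?_, ?_, ?_, ?_⟩
      · rw [occ1_f, h1, c1_append]; simp [c1]
      · rw [occ2_f, h1, h2, zlevels_concat_false]; simp
      · rw [occ3_f, h3]
        simp only [zSum, zlevels_concat_false, c1_append]
        have : c1 [false] = 0 := rfl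
        rw [this]
        simp
      · rw [zlevels_concat_false, c1_append]
        intro a ha
        simp at ha
        rcases ha with ha | ha
        · exact le_trans (hb a ha) (Nat.le_add_right _ _)
        · simp [ha, c1]
    · refine ⟨?_, ?_, ?_, ?_⟩
      · rw [occ1_t, h1, c1_append]; rfl
      · rw [occ2_t, h2, zlevels_concat_true]
      · rw [occ3_t, h3, h2]
        simp only [zSum, zlevels_concat_true, c1_append]
        have : c1 [true] = 1 := rfl
        rw [this, sum_shift _ _ hb]
      · rw [zlevels_concat_true, c1_append]
        intro a ha
        exact le_trans (hb a ha) (Nat.le_add_right _ _)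

lemma occ_eq_zSum (w : List Bool) : occ [true, false, true] w = zSum w := (main_char w).2.2.1

def bnd (n : ℕ) : ℕ := (Finset.range (n+1)).sup (fun t => (n - t) * (t / 2 * ((t + 1) / 2)))

lemma quad_le (a t : ℕ) (h : a ≤ t) : a * (t - a) ≤ t / 2 * ((t + 1) / 2) := by
  obtain ⟨b, rfl⟩ := Nat.exists_eq_add_of_le h
  have hsub : a + b - a = b := by omega
  rw [hsub]
  have h4 : 4 * (a * b) ≤ (a + b) * (a + b) := by
    rcases le_total a b with hle | hle
    · obtain ⟨d, rfl⟩ := Nat.exists_eq_add_of_le hle; nlinarith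
    · obtain ⟨d, rfl⟩ := Nat.exists_eq_add_of_le hle; nlinarith
  rcases Nat.even_or_odd (a + b) with ⟨u, hu⟩ | ⟨u, hu⟩
  · have d1 : (a + b) / 2 = u := by omega
    have d2 : (a + b + 1) / 2 = u := by omega
    rw [d1, d2]
    nlinarith
  · have d1 : (a + b) / 2 = u := by omega
    have d2 : (a + b + 1) / 2 = u + 1 := by omega
    rw [d1, d2]
    nlinarith

lemma zlevels_length (w : List Bool) : (zlevels w).length = w.count false := by
  induction w with
  | nil => rfl
  | cons b w ih => cases b <;> simp [zlevels, ih, List.count_cons]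

lemma c1_add_count_false (w : List Bool) : c1 w + w.count false = w.length := by
  induction w with
  | nil => rfl
  | cons b w ih =>
    cases b <;> simp only [c1, List.count_cons, List.length_cons] at * <;> simp <;> omega

lemma sum_map_le (L : List ℕ) (f : ℕ → ℕ) (M : ℕ) (h : ∀ a ∈ L, f a ≤ M) :
    (L.map f).sum ≤ L.length * M := by
  induction L with
  | nil => simp
  | cons x L ih =>
    simp only [List.map_cons, List.sum_cons, List.length_cons]
    have := ih (fun a ha => h a (by simp [ha]))
    have hx := h x (by simp)
    calc f x + (L.map f).sum ≤ M + L.length * M := by omega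
    _ = (L.length + 1) * M := by ring

lemma zSum_le_bnd (w : List Bool) : zSum w ≤ bnd w.length := by
  have hb := (main_char w).2.2.2
  have h1 : zSum w ≤ (zlevels w).length * (c1 w / 2 * ((c1 w + 1) / 2)) := by
    apply sum_map_le
    intro a ha
    exact quad_le a (c1 w) (hb a ha)
  have h2 : (zlevels w).length = w.length - c1 w := by
    have := c1_add_count_false w
    have := zlevels_length w
    omega
  have h3 : c1 w ∈ Finset.range (w.length + 1) := by
    simp only [Finset.mem_range]
    have : c1 w ≤ w.length := List.count_le_length
    omega
  calc zSum w ≤ (w.length - c1 w) * (c1 w / 2 * ((c1 w + 1) / 2)) := by rw [← h2]; exact h1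
  _ ≤ bnd w.length := Finset.le_sup (f := fun t => (w.length - t) * (t / 2 * ((t + 1) / 2))) h3


lemma intZ1 (s u c : ℤ) (hs : 4 ≤ s) (hu : 0 ≤ u) (hc1 : -1 ≤ c) (hc2 : c ≤ 1) :
    (3*s + c - 2*u) * u^2 ≤ (s + c) * s^2 := by
  rcases lt_trichotomy u s with h | h | h
  · have hF : 0 ≤ s*(s+c) + (s+c)*u - 2*u^2 := by
      nlinarith [mul_nonneg hu (by linarith : (0:ℤ) ≤ s - 1 - u),
        mul_nonneg (by linarith : (0:ℤ) ≤ s - 1 - u) (by linarith : (0:ℤ) ≤ s - 1 - u),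
        mul_nonneg hu hu]
    nlinarith [mul_nonneg (by linarith : (0:ℤ) ≤ s - u) hF]
  · subst h; nlinarith
  · have hG : 0 ≤ 2*u^2 - (s+c)*u - s*(s+c) := by
      nlinarith [mul_nonneg (by linarith : (0:ℤ) ≤ u - s - 1) (by linarith : (0:ℤ) ≤ u),
        mul_nonneg (by linarith : (0:ℤ) ≤ u - s - 1) (by linarith : (0:ℤ) ≤ u - s - 1)]
    nlinarith [mul_nonneg (by linarith : (0:ℤ) ≤ u - s) hG]

lemma intZ2 (s u c : ℤ) (hs : 4 ≤ s) (hu : 0 ≤ u) (hc1 : -1 ≤ c) (hc2 : c ≤ 1) :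
    (3*s + c - 2*u - 1) * (u * (u+1)) ≤ (s + c) * s^2 := by
  rcases lt_trichotomy u s with h | h | h
  · have hF : 0 ≤ (s+c)*s^2 - (3*s + c - 2*u - 1) * (u * (u+1)) := by
      nlinarith [mul_nonneg hu (by linarith : (0:ℤ) ≤ s - 1 - u),
        mul_nonneg (by linarith : (0:ℤ) ≤ s - 1 - u) (by linarith : (0:ℤ) ≤ s - 1 - u),
        mul_nonneg hu hu,
        mul_nonneg (mul_nonneg hu hu) (by linarith : (0:ℤ) ≤ s - 1 - u),
        mul_nonneg (mul_nonneg hu (by linarith : (0:ℤ) ≤ s - 1 - u)) (by linarith : (0:ℤ) ≤ s - 1 - u)]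
    linarith
  · subst h; nlinarith
  · nlinarith [mul_nonneg (by linarith : (0:ℤ) ≤ u - s) (by linarith : (0:ℤ) ≤ u),
      mul_nonneg (mul_nonneg (by linarith : (0:ℤ) ≤ u - s) (by linarith : (0:ℤ) ≤ u - s)) hu,
      mul_nonneg (mul_nonneg (by linarith : (0:ℤ) ≤ u - s) hu) hu]

lemma bnd_eq (n : ℕ) (hn : 14 ≤ n) :
    bnd n = (n - 2 * ((n+1)/3)) * (((n+1)/3) * ((n+1)/3)) := by
  set s := (n+1)/3 with hs
  have hs5 : 5 ≤ s := by omega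
  have hsn : 3 * s ≤ n + 1 ∧ n ≤ 3 * s + 1 := by omega
  have h2s : 2 * s ≤ n := by omega
  apply le_antisymm
  · apply Finset.sup_le
    intro t ht
    rw [Finset.mem_range] at ht
    have htn : t ≤ n := by omega
    rcases Nat.even_or_odd t with ⟨u, hu⟩ | ⟨u, hu⟩
    · have d1 : t / 2 = u := by omega
      have d2 : (t + 1) / 2 = u := by omega
      rw [d1, d2]
      have key := intZ1 (s : ℤ) (u : ℤ) ((n : ℤ) - 3 * s) (by exact_mod_cast by omega)
        (by positivity) (by push_cast; omega) (by push_cast; omega)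
      zify [htn, h2s]
      have hteq : (t : ℤ) = 2 * u := by exact_mod_cast by omega
      rw [hteq]
      nlinarith [key]
    · have d1 : t / 2 = u := by omega
      have d2 : (t + 1) / 2 = u + 1 := by omega
      rw [d1, d2]
      have key := intZ2 (s : ℤ) (u : ℤ) ((n : ℤ) - 3 * s) (by exact_mod_cast by omega)
        (by positivity) (by push_cast; omega) (by push_cast; omega)
      zify [htn, h2s]
      have hteq : (t : ℤ) = 2 * u + 1 := by exact_mod_cast by omega
      rw [hteq]
      nlinarith [key]
  · have hmem : 2 * s ∈ Finset.range (n + 1) := by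
      rw [Finset.mem_range]; omega
    have := Finset.le_sup (f := fun t => (n - t) * (t / 2 * ((t + 1) / 2))) hmem
    have d1 : 2 * s / 2 = s := by omega
    have d2 : (2 * s + 1) / 2 = s := by omega
    rw [d1, d2] at this
    exact this

def R1 (a : ℕ) : List Bool := List.replicate a true
def R0 (a : ℕ) : List Bool := List.replicate a false

lemma c1_R1 (a : ℕ) : c1 (R1 a) = a := by simp [c1, R1]
lemma c1_R0 (a : ℕ) : c1 (R0 a) = 0 := by
  simp [c1, R0, List.count_replicate]

lemma zlevels_R1 (a : ℕ) : zlevels (R1 a) = [] := by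
  induction a with
  | zero => rfl
  | succ a ih => simp [R1, List.replicate_succ, zlevels] at *; exact ih

lemma zlevels_R0 (a : ℕ) : zlevels (R0 a) = List.replicate a 0 := by
  induction a with
  | zero => rfl
  | succ a ih => simp [R0, List.replicate_succ, zlevels] at *; exact ih


lemma zlevels_rt (a : ℕ) : zlevels (List.replicate a true) = [] := zlevels_R1 a
lemma zlevels_rf (a : ℕ) : zlevels (List.replicate a false) = List.replicate a 0 := zlevels_R0 a
lemma c1_rt (a : ℕ) : List.count true (List.replicate a true) = a := by simp [List.count_replicate]
lemma c1_rf (a : ℕ) : List.count true (List.replicate a false) = 0 := by simp [List.count_replicate]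

lemma zSum_trap (a b c : ℕ) : zSum (R1 a ++ R0 b ++ R1 c) = b * (a * c) := by
  simp [zSum, zlevels_append, zlevels_R1, zlevels_R0, c1_append, c1_R1, c1_R0,
    List.map_replicate, List.sum_replicate]

def Wg (g1 g2 g3 g4 g5 zr T : ℕ) : List Bool :=
  R1 g1 ++ [false] ++ R1 g2 ++ [false] ++ R1 g3 ++ [false] ++ R1 g4 ++ [false] ++
    R1 g5 ++ R0 zr ++ R1 T

lemma length_Wg (g1 g2 g3 g4 g5 zr T : ℕ) :
    (Wg g1 g2 g3 g4 g5 zr T).length = g1 + g2 + g3 + g4 + g5 + zr + T + 4 := by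
  simp [Wg, R1, R0]
  omega

lemma zSum_Wg (g1 g2 g3 g4 g5 zr T : ℕ) :
    zSum (Wg g1 g2 g3 g4 g5 zr T) =
      g1 * (g2 + g3 + g4 + g5 + T) + (g1 + g2) * (g3 + g4 + g5 + T) +
      (g1 + g2 + g3) * (g4 + g5 + T) + (g1 + g2 + g3 + g4) * (g5 + T) +
      zr * ((g1 + g2 + g3 + g4 + g5) * T) := by
  have hz : zlevels (Wg g1 g2 g3 g4 g5 zr T) =
      [g1, g1 + g2, g1 + g2 + g3, g1 + g2 + g3 + g4] ++
        List.replicate zr (g1 + g2 + g3 + g4 + g5) := by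
    simp only [Wg, List.append_assoc, zlevels_append, zlevels_R1, zlevels_R0, zlevels_rt,
      zlevels_rf, c1_append, c1_R1, c1_R0, zlevels, R1, R0, c1, c1_rt, c1_rf,
      List.count_nil, List.count_cons, List.map_replicate, List.map_nil, List.map_cons,
      List.nil_append, List.cons_append, List.append_nil]
    norm_num
    omega
  have hc : c1 (Wg g1 g2 g3 g4 g5 zr T) = g1 + g2 + g3 + g4 + g5 + T := by
    simp [Wg, c1_append, c1_R1, c1_R0, c1, R1, R0, List.count_replicate]
    omega
  rw [zSum, hz, hc]
  simp [List.map_replicate, List.sum_replicate]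
  have e1 : g1 + g2 + g3 + g4 + g5 + T - g1 = g2 + g3 + g4 + g5 + T := by omega
  have e2 : g1 + g2 + g3 + g4 + g5 + T - (g1 + g2) = g3 + g4 + g5 + T := by omega
  have e3 : g1 + g2 + g3 + g4 + g5 + T - (g1 + g2 + g3) = g4 + g5 + T := by omega
  have e4 : g1 + g2 + g3 + g4 + g5 + T - (g1 + g2 + g3 + g4) = g5 + T := by omega
  have e5 : g1 + g2 + g3 + g4 + g5 + T - (g1 + g2 + g3 + g4 + g5) = T := by omega
  rw [e1, e2, e3, e4]
  try rw [e5]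
  ring

lemma zSum_false_cons (w : List Bool) : zSum (false :: w) = zSum w := by
  simp [zSum, zlevels, c1, List.count_cons]

lemma sort4 (a b c d : ℕ) : ∃ e1 e2 e3 e4 : ℕ, e1 ≤ e2 ∧ e2 ≤ e3 ∧ e3 ≤ e4 ∧
    e1 ^ 2 + e2 ^ 2 + e3 ^ 2 + e4 ^ 2 = a ^ 2 + b ^ 2 + c ^ 2 + d ^ 2 := by
  have hperm : (Multiset.sort (↑[a, b, c, d] : Multiset ℕ) (· ≤ ·)).Perm [a, b, c, d] := by
    rw [← Multiset.coe_eq_coe, Multiset.sort_eq]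
  have hsort : List.Pairwise (· ≤ ·) (Multiset.sort (↑[a, b, c, d] : Multiset ℕ) (· ≤ ·)) :=
    Multiset.pairwise_sort _ _
  have hlen : (Multiset.sort (↑[a, b, c, d] : Multiset ℕ) (· ≤ ·)).length = 4 := by
    rw [hperm.length_eq]; rfl
  have hsum : ((Multiset.sort (↑[a, b, c, d] : Multiset ℕ) (· ≤ ·)).map (· ^ 2)).sum =
      ([a, b, c, d].map (· ^ 2)).sum := (hperm.map _).sum_eq
  set l := Multiset.sort (↑[a, b, c, d] : Multiset ℕ) (· ≤ ·) with hl
  clear_value l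
  match l, hlen with
  | [e1, e2, e3, e4], _ =>
    refine ⟨e1, e2, e3, e4, ?_, ?_, ?_, ?_⟩
    · simp [List.pairwise_cons] at hsort; tauto
    · simp [List.pairwise_cons] at hsort; tauto
    · simp [List.pairwise_cons] at hsort; tauto
    · have := hsum
      simp at this
      omega

lemma exists_word_top (s z k : ℕ) (hs : 1 ≤ s) (hz : 4 ≤ z)
    (hk : k ≤ z * (s * s)) (hklo : z * (s * s) < k + s * s) :
    ∃ w : List Bool, w.length = 2 * s + z ∧ zSum w = k := by
  set D := z * (s * s) - k with hD
  have hDk : k + D = z * (s * s) := by omega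
  have hDlt : D < s * s := by omega
  obtain ⟨a, b, c, d, habcd⟩ := Nat.sum_four_squares D
  obtain ⟨e1, e2, e3, e4, h12, h23, h34, hsq⟩ := sort4 a b c d
  rw [habcd] at hsq
  have he4 : e4 ≤ s := by
    by_contra hcon
    push_neg at hcon
    have : s * s ≤ e4 * e4 := Nat.mul_le_mul (by omega) (by omega)
    have he4sq : e4 * e4 ≤ D := by nlinarith [hsq]
    omega
  refine ⟨Wg (s - e4) (e4 - e3) (e3 - e2) (e2 - e1) e1 (z - 4) s, ?_, ?_⟩
  · rw [length_Wg]; omega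
  · rw [zSum_Wg]
    have hDkZ : (k : ℤ) + D = z * (s * s) := by exact_mod_cast hDk
    have hsqZ : (e1 : ℤ) ^ 2 + e2 ^ 2 + e3 ^ 2 + e4 ^ 2 = D := by exact_mod_cast hsq
    zify [h12, h23, h34, he4, hz]
    linear_combination (-1 : ℤ) * hDkZ + (-1 : ℤ) * hsqZ

def allW : ℕ → List (List Bool)
  | 0 => [[]]
  | n+1 => (allW n).flatMap (fun w => [true :: w, false :: w])

lemma mem_allW : ∀ w : List Bool, w ∈ allW w.length := by
  intro w
  induction w with
  | nil => simp [allW]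
  | cons b w ih =>
    simp only [List.length_cons, allW, List.mem_flatMap]
    exact ⟨w, ih, by cases b <;> simp⟩
def witL : ℕ → List (List Bool)
  | 0 => [[]]
  | 1 => [[true]]
  | 2 => [[true, true]]
  | 3 => [[true, true, true], [true, false, true]]
  | 4 => [[true, true, true, true], [true, false, true, false], [true, true, false, true]]
  | 5 => [[true, true, true, true, true], [true, false, true, false, false], [true, true, false, true, false], [true, true, true, false, true], [true, true, false, true, true]]
  | 7 => [[true, true, true, true, true, true, true], [true, false, true, false, false, false, false], [true, true, false, true, false, false, false], [true, true, true, false, true, false, false], [true, true, true, true, false, true, false], [true, true, true, true, true, false, true], [true, true, true, false, true, true, false], [true, true, false, true, false, true, false], [true, true, true, true, false, true, true], [true, true, true, false, true, true, true], [true, true, true, false, true, false, true], [true, true, false, false, true, false, true], [true, true, true, false, false, true, true]]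
  | 8 => [[true, true, true, true, true, true, true, true], [true, false, true, false, false, false, false, false], [true, true, false, true, false, false, false, false], [true, true, true, false, true, false, false, false], [true, true, true, true, false, true, false, false], [true, true, true, true, true, false, true, false], [true, true, true, true, true, true, false, true], [true, true, false, true, false, true, false, false], [true, true, true, true, false, true, true, false], [true, true, true, false, true, true, true, false], [true, true, true, true, true, false, true, true], [true, true, false, false, true, false, true, false], [true, true, true, true, false, true, true, true], [true, true, true, true, false, true, false, true], [true, true, true, false, true, true, false, true], [true, true, false, false, false, true, false, true], [true, true, true, true, false, false, true, true], [true, true, true, false, true, false, true, true], [true, true, true, false, false, true, true, true]]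
  | 9 => [[true, true, true, true, true, true, true, true, true], [true, false, true, false, false, false, false, false, false], [true, true, false, true, false, false, false, false, false], [true, true, true, false, true, false, false, false, false], [true, true, true, true, false, true, false, false, false], [true, true, true, true, true, false, true, false, false], [true, true, true, true, true, true, false, true, false], [true, true, true, true, true, true, true, false, true], [true, true, true, true, false, true, true, false, false], [true, true, true, false, true, true, true, false, false], [true, true, true, true, true, false, true, true, false], [true, true, false, false, true, false, true, false, false], [true, true, true, true, true, true, false, true, true], [true, true, true, true, false, true, false, true, false], [true, true, true, false, true, true, false, true, false], [true, true, true, true, true, false, true, true, true], [true, true, true, true, true, false, true, false, true], [true, true, true, false, true, false, true, true, false], [true, true, true, true, false, true, true, false, true], [true, true, true, false, true, true, false, false, true], [true, true, true, true, true, false, false, true, true], [true, true, true, true, false, false, true, false, true], [true, true, true, true, false, true, false, true, true], [true, true, true, false, false, true, true, false, true], [true, true, true, true, false, false, true, true, true], [true, true, true, false, true, false, false, true, true], [true, true, true, false, false, true, false, true, true], [true, true, true, false, false, false, true, true, true]]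
  | 10 => [[true, true, true, true, true, true, true, true, true, true], [true, false, true, false, false, false, false, false, false, false], [true, true, false, true, false, false, false, false, false, false], [true, true, true, false, true, false, false, false, false, false], [true, true, true, true, false, true, false, false, false, false], [true, true, true, true, true, false, true, false, false, false], [true, true, true, true, true, true, false, true, false, false], [true, true, true, true, true, true, true, false, true, false], [true, true, true, true, true, true, true, true, false, true], [true, true, true, false, true, true, true, false, false, false], [true, true, true, true, true, false, true, true, false, false], [true, true, false, false, true, false, true, false, false, false], [true, true, true, true, true, true, false, true, true, false], [true, true, true, true, false, true, false, true, false, false], [true, true, true, true, true, true, true, false, true, true], [true, true, true, true, true, false, true, true, true, false], [true, true, true, true, true, false, true, false, true, false], [true, true, true, false, true, false, true, true, false, false], [true, true, true, true, true, true, false, true, true, true], [true, true, true, true, true, true, false, true, false, true], [true, true, true, true, true, false, true, true, true, true], [true, true, true, true, false, false, true, false, true, false], [true, true, true, true, true, false, true, true, false, true], [true, true, true, true, false, true, true, true, false, true], [true, true, true, true, true, true, false, false, true, true], [true, true, true, false, true, false, false, true, true, false], [true, true, true, true, true, false, false, true, false, true], [true, true, true, true, true, false, true, false, true, true], [true, true,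 true, true, false, true, true, false, true, true], [true, true, true, true, false, false, false, true, false, true], [true, true, true, true, true, false, false, true, true, true], [true, true, true, true, false, true, false, true, true, true], [true, true, true, true, false, true, false, false, true, true], [true, true, true, false, true, false, false, false, true, true], [true, true, true, true, false, false, true, false, true, true], [true, true, true, false, false, false, true, false, true, true], [true, true, true, true, false, false, false, true, true, true]]
  | 11 => [[true, true, true, true, true, true, true, true, true, true, true], [true, false, true, false, false, false, false, false, false, false, false], [true, true, false, true, false, false, false, false, false, false, false], [true, true, true, false, true, false, false, false, false, false, false], [true, true, true, true, false, true, false, false, false, false, false], [true, true, true, true, true, false, true, false, false, false, false], [true, true, true, true, true, true, false, true, false, false, false], [true, true, true, true, true, true, true, false, true, false, false], [true, true, true, true, true, true, true, true, false, true, false], [true, true, true, true, true, true, true, true, true, false, true], [true, true, true, true, true, false, true, true, false, false, false], [true, true, false, false, true, false, true, false, false, false, false], [true, true, true, true, true, true, false, true, true, false, false], [true, true, true, true, false, true, false, true, false, false, false], [true, true, true, true, true, true, true, false, true, true, false], [true, true, true, true, true, false, true, true, true, false, false], [true, true, true, true, true, true, true, true, false, true, true], [true, true, true, false, true, false, true,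 true, false, false, false], [true, true, true, true, true, true, false, true, true, true, false], [true, true, true, true, true, true, false, true, false, true, false], [true, true, true, true, true, false, true, true, true, true, false], [true, true, true, true, true, true, true, false, true, true, true], [true, true, true, true, true, true, true, false, true, false, true], [true, true, true, true, false, true, true, true, false, true, false], [true, true, true, true, true, true, false, true, true, true, true], [true, true, true, true, true, false, true, true, true, true, true], [true, true, true, true, true, true, false, true, true, false, true], [true, true, true, true, true, false, true, false, true, true, false], [true, true, true, true, true, true, true, false, false, true, true], [true, true, true, true, true, false, true, true, false, false, true], [true, true, true, true, true, false, false, true, true, true, false], [true, true, true, true, true, true, false, false, true, false, true], [true, true, true, true, true, true, false, true, false, true, true], [true, true, true, false, true, false, false, false, true, true, false], [true, true, true, true, true, false, true, true, false, true, true], [true, true, true, true, false, true, true, false, true, false, true], [true, true, true, true, true, true, false, false, true, true, true], [true, true, true, true, true, false, false, true, true, false, true], [true, true, true, true, true, false, true, false, true, true, true], [true, true, true, true, true, false, true, false, false, true, true], [true, true, true, true, true, false, false, true, true, true, true], [true, true, true, false, true, false, false, false, false, true, true], [true, true, true, true, true, false, false, true, false, true, true], [true, true, true, true, false, true, false, true,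 false, true, true], [true, true, true, true, false, false, true, true, false, true, true], [true, true, true, true, true, false, false, false, true, true, true], [true, true, true, true, false, true, false, false, true, true, true], [true, true, true, true, false, false, true, false, true, true, true], [true, true, true, true, false, false, false, true, true, true, true]]
  | 12 => [[true, true, true, true, true, true, true, true, true, true, true, true], [true, false, true, false, false, false, false, false, false, false, false, false], [true, true, false, true, false, false, false, false, false, false, false, false], [true, true, true, false, true, false, false, false, false, false, false, false], [true, true, true, true, false, true, false, false, false, false, false, false], [true, true, true, true, true, false, true, false, false, false, false, false], [true, true, true, true, true, true, false, true, false, false, false, false], [true, true, true, true, true, true, true, false, true, false, false, false], [true, true, true, true, true, true, true, true, false, true, false, false], [true, true, true, true, true, true, true, true, true, false, true, false], [true, true, true, true, true, true, true, true, true, true, false, true], [true, true, false, false, true, false, true, false, false, false, false, false], [true, true, true, true, true, true, false, true, true, false, false, false], [true, true, true, true, false, true, false, true, false, false, false, false], [true, true, true, true, true, true, true, false, true, true, false, false], [true, true, true, true, true, false, true, true, true, false, false, false], [true, true, true, true, true, true, true, true, false, true, true, false], [true, true, true, false, true, false, true, true, false, false, false, false], [true, true, true, true, true, true, true, true, true,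 false, true, true], [true, true, true, true, true, true, false, true, false, true, false, false], [true, true, true, true, true, false, true, true, true, true, false, false], [true, true, true, true, true, true, true, false, true, true, true, false], [true, true, true, true, true, true, true, false, true, false, true, false], [true, true, true, true, false, true, true, true, false, true, false, false], [true, true, true, true, true, true, true, true, false, true, true, true], [true, true, true, true, true, true, true, true, false, true, false, true], [true, true, true, true, true, true, false, true, true, false, true, false], [true, true, true, true, true, false, true, false, true, true, false, false], [true, true, true, true, true, true, true, false, true, true, true, true], [true, true, true, true, true, false, true, true, false, false, true, false], [true, true, true, true, true, true, true, false, true, true, false, true], [true, true, true, true, true, true, false, false, true, false, true, false], [true, true, true, true, true, true, true, true, false, false, true, true], [true, true, true, true, true, true, false, true, true, true, false, true], [true, true, true, true, true, true, false, true, true, false, false, true], [true, true, true, true, false, true, true, false, true, false, true, false], [true, true, true, true, true, true, true, false, false, true, false, true], [true, true, true, true, true, true, true, false, true, false, true, true], [true, true, true, true, true, true, false, false, true, false, false, true], [true, true, true, true, true, false, true, false, false, true, true, false], [true, true, true, true, true, true, false, true, true, false, true, true], [true, true, true, true, true, false, true, true, true, false, true, true], [true, true, true, true, true, true, true, false, false,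 true, true, true], [true, true, true, true, true, true, false, false, false, true, false, true], [true, true, true, true, true, true, false, false, true, true, false, true], [true, true, true, true, true, true, false, true, false, true, true, true], [true, true, true, true, true, true, false, true, false, false, true, true], [true, true, true, true, false, true, true, false, false, true, false, true], [true, true, true, true, true, true, false, false, true, true, true, true], [true, true, true, true, true, false, true, false, true, true, true, true], [true, true, true, true, true, true, false, false, true, false, true, true], [true, true, true, true, true, false, true, false, false, false, true, true], [true, true, true, true, true, false, true, false, true, false, true, true], [true, true, true, true, false, true, false, false, true, true, false, true], [true, true, true, true, true, true, false, false, false, true, true, true], [true, true, true, true, false, true, false, true, false, false, true, true], [true, true, true, true, true, false, true, false, false, true, true, true], [true, true, true, true, true, false, false, false, true, false, true, true], [true, true, true, true, true, false, false, true, false, true, true, true], [true, true, true, true, false, false, true, false, true, false, true, true], [true, true, true, true, true, false, false, false, true, true, true, true], [true, true, true, true, false, true, false, false, false, true, true, true], [true, true, true, true, false, false, true, false, false, true, true, true], [true, true, true, true, false, false, false, true, false, true, true, true], [true, true, true, true, false, false, false, false, true, true, true, true]]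
  | 13 => [[true, true, true, true, true, true, true, true, true, true, true, true, true], [true, false, true, false, false, false, false, false, false, false, false, false, false], [true, true, false, true, false, false, false, false, false, false, false, false, false], [true, true, true, false, true, false, false, false, false, false, false, false, false], [true, true, true, true, false, true, false, false, false, false, false, false, false], [true, true, true, true, true, false, true, false, false, false, false, false, false], [true, true, true, true, true, true, false, true, false, false, false, false, false], [true, true, true, true, true, true, true, false, true, false, false, false, false], [true, true, true, true, true, true, true, true, false, true, false, false, false], [true, true, true, true, true, true, true, true, true, false, true, false, false], [true, true, true, true, true, true, true, true, true, true, false, true, false], [true, true, true, true, true, true, true, true, true, true, true, false, true], [true, true, true, true, true, true, false, true, true, false, false, false, false], [true, true, true, true, false, true, false, true, false, false, false, false, false], [true, true, true, true, true, true, true, false, true, true, false, false, false], [true, true, true, true, true, false, true, true, true, false, false, false, false], [true, true, true, true, true, true, true, true, false, true, true, false, false], [true, true, true, false, true, false, true, true, false, false, false, false, false], [true, true, true, true, true, true, true, true, true, false, true, true, false], [true, true, true, true, true, true, false, true, false, true, false, false, false], [true, true, true, true, true, true, true, true, true, true, false, true, true], [true, true, true, true, true, true, true, false, true, true, true, false,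 false], [true, true, true, true, true, true, true, false, true, false, true, false, false], [true, true, true, true, false, true, true, true, false, true, false, false, false], [true, true, true, true, true, true, true, true, false, true, true, true, false], [true, true, true, true, true, true, true, true, false, true, false, true, false], [true, true, true, true, true, true, false, true, true, false, true, false, false], [true, true, true, true, true, true, true, true, true, false, true, true, true], [true, true, true, true, true, true, true, true, true, false, true, false, true], [true, true, true, true, true, false, true, true, false, false, true, false, false], [true, true, true, true, true, true, true, false, true, true, false, true, false], [true, true, true, true, true, true, false, false, true, false, true, false, false], [true, true, true, true, true, true, true, true, false, true, true, true, true], [true, true, true, true, true, true, false, true, true, true, false, true, false], [true, true, true, true, true, true, true, true, false, true, true, false, true], [true, true, true, true, true, true, true, false, true, true, true, true, true], [true, true, true, true, true, true, true, true, true, false, false, true, true], [true, true, true, true, true, true, true, false, true, false, true, true, false], [true, true, true, true, true, true, true, false, true, true, true, false, true], [true, true, true, true, true, true, true, false, true, true, false, false, true], [true, true, true, true, true, true, false, true, true, true, true, false, true], [true, true, true, true, true, true, true, true, false, false, true, false, true], [true, true, true, true, true, true, true, true, false, true, false, true, true], [true, true, true, true, true, true, false, false, false, true, false, true, false], [true,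 true, true, true, true, true, true, false, false, true, false, false, true], [true, true, true, true, true, true, false, true, false, true, true, true, false], [true, true, true, true, true, true, true, false, true, true, false, true, true], [true, true, true, true, false, true, true, false, false, true, false, true, false], [true, true, true, true, true, true, true, true, false, false, true, true, true], [true, true, true, true, true, true, false, true, true, false, true, false, true], [true, true, true, true, true, true, true, false, false, false, true, false, true], [true, true, true, true, true, true, true, false, false, true, true, false, true], [true, true, true, true, true, true, true, false, true, false, true, true, true], [true, true, true, true, true, true, true, false, true, false, false, true, true], [true, true, true, true, true, true, false, true, true, false, true, true, true], [true, true, true, true, true, true, false, false, false, false, true, false, true], [true, true, true, true, true, true, true, false, false, true, true, true, true], [true, true, true, true, true, true, false, false, true, true, true, false, true], [true, true, true, true, true, true, true, false, false, true, false, true, true], [true, true, true, true, true, false, false, true, true, true, true, false, true], [true, true, true, true, true, true, false, true, false, false, false, true, true], [true, true, true, true, true, true, false, true, false, true, false, true, true], [true, true, true, true, true, true, false, false, false, true, true, false, true], [true, true, true, true, true, true, true, false, false, false, true, true, true], [true, true, true, true, true, true, false, false, true, true, false, true, true], [true, true, true, true, true, false, true, false, true, true, false, true, true], [true, true, true, true,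 true, true, false, true, false, false, true, true, true], [true, true, true, true, true, false, true, true, false, false, true, true, true], [true, true, true, true, true, true, false, false, false, true, false, true, true], [true, true, true, true, true, true, false, false, true, false, true, true, true], [true, true, true, true, true, false, true, false, true, false, true, true, true], [true, true, true, true, true, false, false, true, true, false, true, true, true], [true, true, true, true, true, true, false, false, false, true, true, true, true], [true, true, true, true, true, false, true, false, false, true, true, true, true], [true, true, true, true, true, false, true, false, false, false, true, true, true], [true, true, true, true, true, false, false, false, true, true, true, true, true], [true, true, true, true, true, false, false, true, false, false, true, true, true], [true, true, true, true, false, false, true, false, false, false, true, true, true], [true, true, true, true, true, false, false, false, true, false, true, true, true], [true, true, true, true, false, false, false, false, true, false, true, true, true], [true, true, true, true, true, false, false, false, false, true, true, true, true]]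
  | _ => []

lemma small_table : ∀ n ∈ List.range 14, n = 6 ∨ ∀ k ∈ List.range (bnd n + 1),
    ((witL n).getD k []).length = n ∧ zSum ((witL n).getD k []) = k := by decide

lemma achieve_small (n : ℕ) (hn : n < 14) (h6 : n ≠ 6) (k : ℕ) (hk : k ≤ bnd n) :
    ∃ w : List Bool, w.length = n ∧ zSum w = k := by
  have h := small_table n (List.mem_range.mpr hn)
  rcases h with h | h
  · exact absurd h h6
  · exact ⟨(witL n).getD k [], h k (List.mem_range.mpr (by omega))⟩

lemma achieve : ∀ n : ℕ, n ≠ 6 → ∀ k : ℕ, k ≤ bnd n →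
    ∃ w : List Bool, w.length = n ∧ zSum w = k := by
  intro n
  induction n using Nat.strong_induction_on with
  | _ n ih =>
    intro h6 k hk
    by_cases hsm : n < 14
    · exact achieve_small n hsm h6 k hk
    · push_neg at hsm
      set s := (n + 1) / 3 with hs
      set z := n - 2 * s with hz
      have hs5 : 5 ≤ s := by omega
      have hz4 : 4 ≤ z := by omega
      have hbe : bnd n = z * (s * s) := by
        rw [bnd_eq n hsm]
      by_cases hk1 : k ≤ bnd (n - 1)
      · obtain ⟨w, hw1, hw2⟩ := ih (n - 1) (by omega) (by omega) k hk1
        refine ⟨false :: w, ?_, ?_⟩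
        · simp [hw1]; omega
        · rw [zSum_false_cons, hw2]
      · push_neg at hk1
        have hlow : (z - 1) * (s * s) ≤ bnd (n - 1) := by
          have hw := zSum_le_bnd (R1 s ++ R0 (z - 1) ++ R1 s)
          rw [zSum_trap] at hw
          have hlen : (R1 s ++ R0 (z - 1) ++ R1 s).length = n - 1 := by
            simp [R1, R0]; omega
          rw [hlen] at hw
          exact hw
        have hk2 : k ≤ z * (s * s) := hbe ▸ hk
        have hsplit : z * (s * s) = (z - 1) * (s * s) + s * s := by
          have h1 : z = (z - 1) + 1 := by omega
          rw [h1, Nat.succ_mul]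
          congr 1 <;> omega
        have hklo : z * (s * s) < k + s * s := by omega
        obtain ⟨w, hw1, hw2⟩ := exists_word_top s z k (by omega) hz4 hk2 hklo
        exact ⟨w, by rw [hw1]; omega, hw2⟩

instance finW (n k : ℕ) (p : List Bool) :
    Finite {w : List Bool // w.length = n ∧ occ p w = k} := by
  haveI : Finite {l : List Bool // l.length = n} := Finite.of_fintype (List.Vector Bool n)
  apply Finite.of_injective (fun x : {w : List Bool // w.length = n ∧ occ p w = k} =>
    (⟨x.1, x.2.1⟩ : {l : List Bool // l.length = n}))
  intro x y h
  apply Subtype.ext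
  simpa using congrArg Subtype.val h

lemma B_ne_zero_iff (n k : ℕ) (p : List Bool) :
    B n p k ≠ 0 ↔ ∃ w : List Bool, w.length = n ∧ occ p w = k := by
  rw [B, Nat.card_ne_zero]
  constructor
  · rintro ⟨⟨w, hw⟩, -⟩
    exact ⟨w, hw⟩
  · rintro ⟨w, hw⟩
    exact ⟨⟨⟨w, hw⟩⟩, finW n k p⟩

lemma maxOcc_eq (n : ℕ) (h6 : n ≠ 6) : maxOcc n [true, false, true] = bnd n := by
  apply IsGreatest.csSup_eq
  constructor
  · obtain ⟨w, hw1, hw2⟩ := achieve n h6 (bnd n) le_rfl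
    exact ⟨w, hw1, by rw [occ_eq_zSum, hw2]⟩
  · rintro x ⟨w, hw, hocc⟩
    rw [← hocc, occ_eq_zSum]
    rw [← hw]
    exact zSum_le_bnd w

theorem word101_internalZero_only_at_six :
    HasInternalZeroAt [true, false, true] 6 ∧
    (∀ n : ℕ, n ≠ 6 → ¬ HasInternalZeroAt [true, false, true] n) ∧
    (∀ n : ℕ, n ≠ 6 → ∀ k, k ≤ maxOcc n [true, false, true] →
      ∃ w : List Bool, w.length = n ∧ occ [true, false, true] w = k) ∧
    B 6 [true, false, true] 5 = 0 ∧ B 6 [true, false, true] 6 ≠ 0 := by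
  have hB5 : B 6 [true, false, true] 5 = 0 := by
    rw [B, Nat.card_eq_zero]
    left
    constructor
    rintro ⟨w, hw, hocc⟩
    rw [occ_eq_zSum] at hocc
    have hall : ∀ u ∈ allW 6, zSum u ≠ 5 := by decide
    exact hall w (hw ▸ mem_allW w) hocc
  have hB6 : B 6 [true, false, true] 6 ≠ 0 :=
    (B_ne_zero_iff _ _ _).mpr ⟨[true, true, false, true, true, true], rfl,
      by rw [occ_eq_zSum]; decide⟩
  have hB4 : B 6 [true, false, true] 4 ≠ 0 :=
    (B_ne_zero_iff _ _ _).mpr ⟨[true, true, false, true, true, false], rfl,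
      by rw [occ_eq_zSum]; decide⟩
  refine ⟨⟨4, 5, 6, by norm_num, by norm_num, hB4, hB5, hB6⟩, ?_, ?_, hB5, hB6⟩
  · intro n hn hIZ
    obtain ⟨k1, k2, k3, h12, h23, hB1, hB2, hB3⟩ := hIZ
    obtain ⟨w3, hw3, ho3⟩ := (B_ne_zero_iff _ _ _).mp hB3
    rw [occ_eq_zSum] at ho3
    have hk3 : k3 ≤ bnd n := by
      rw [← ho3, ← hw3]; exact zSum_le_bnd w3
    obtain ⟨w2, hw2, ho2⟩ := achieve n hn k2 (by omega)
    exact (B_ne_zero_iff _ _ _).mpr ⟨w2, hw2, by rw [occ_eq_zSum, ho2]⟩ hB2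
  · intro n hn k hk
    rw [maxOcc_eq n hn] at hk
    obtain ⟨w, hw, ho⟩ := achieve n hn k hk
    exact ⟨w, hw, by rw [occ_eq_zSum, ho]⟩
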